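/- Let m ≥ 0 and for each k ∈ ℕ₀ let p^{[k]}(z) and p(z) be complex polynomials of degree ≤ m. Assume that for every R > 0 there exists a constant C_m(R) > 0 such that |p^{[k]}(z) - p(z)| ≤ C_m(R)·2^{-k} for all k ∈ ℕ₀ and all |z| ≤ R. If α is a simple zero of p (i.e., p(α) = 0 and p'(α) ≠ 0), then there exist k₀ ∈ ℕ₀ and a constant ρ > 0 such that for each integer k ≥ k₀ the polynomial p^{[k]} has a zero α^{[k]} with |α^{[k]} - α| ≤ ρ·2^{-k}. -/

import Mathlib

open Polynomial

/-- If the polynomials `p^{[k]}` of degree `≤ m` converge to `p` (degree `≤ m`) at rate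
`2^{-k}` uniformly on every ball `|z| ≤ R`, and `α` is a simple zero of `p`, then there
exist `k₀` and `ρ > 0` such that for every `k ≥ k₀` the polynomial `p^{[k]}` has a zero
`α^{[k]}` with `|α^{[k]} - α| ≤ ρ·2^{-k}`. -/
theorem stmt_3 (m : ℕ) (P : ℕ → Polynomial ℂ) (p : Polynomial ℂ)
    (hdegP : ∀ k, (P k).natDegree ≤ m) (hdegp : p.natDegree ≤ m)
    (happrox : ∀ R : ℝ, 0 < R → ∃ C : ℝ, 0 < C ∧
      ∀ (k : ℕ) (z : ℂ), ‖z‖ ≤ R →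
        ‖(P k).eval z - p.eval z‖ ≤ C / 2 ^ k)
    (α : ℂ) (hzero : p.eval α = 0) (hsimple : (derivative p).eval α ≠ 0) :
    ∃ (k₀ : ℕ) (ρ : ℝ), 0 < ρ ∧
      ∀ k : ℕ, k₀ ≤ k → ∃ αk : ℂ, (P k).eval αk = 0 ∧ ‖αk - α‖ ≤ ρ / 2 ^ k := by
  -- Factor p = (X - α) * q with q(α) = p'(α) ≠ 0
  set q : Polynomial ℂ := p /ₘ (X - C α) with hq
  have hfac : (X - C α) * q = p :=
    (mul_divByMonic_eq_iff_isRoot).2 hzero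
  have hqα : q.eval α = (derivative p).eval α := by
    have := congrArg derivative hfac
    rw [derivative_mul, derivative_sub, derivative_X, derivative_C, sub_zero, one_mul] at this
    have := congrArg (Polynomial.eval α) this
    simp at this
    linear_combination this
  have hqα0 : 0 < ‖q.eval α‖ := by
    rw [hqα]; simpa using hsimple
  set cq : ℝ := ‖q.eval α‖ with hcq
  -- continuity of eval q: find r > 0 with |q z| ≥ cq/2 for |z - α| ≤ r
  have hcont : ContinuousAt (fun z => ‖q.eval z‖) α :=
    (continuous_norm.comp q.continuous).continuousAt
  have hr : ∃ r > 0, ∀ z : ℂ, ‖z - α‖ ≤ r → cq / 2 ≤ ‖q.eval z‖ := by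
    have := Metric.continuousAt_iff.1 hcont (cq / 2) (by linarith)
    obtain ⟨δ, hδ, hδ'⟩ := this
    refine ⟨δ / 2, by linarith, fun z hz => ?_⟩
    have hd : dist z α < δ := by
      rw [Complex.dist_eq]; linarith
    have := hδ' hd
    rw [Real.dist_eq, abs_sub_lt_iff] at this
    linarith
  obtain ⟨r, hrpos, hrq⟩ := hr
  set R : ℝ := ‖α‖ + r with hR
  have hRpos : 0 < R := by positivity
  obtain ⟨Cc, hCc, hCbound⟩ := happrox R hRpos
  -- key estimate: |p z| ≥ (cq/2) * |z - α| for |z - α| ≤ r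
  have hplow : ∀ z : ℂ, ‖z - α‖ ≤ r →
      cq / 2 * ‖z - α‖ ≤ ‖p.eval z‖ := by
    intro z hz
    have : p.eval z = (z - α) * q.eval z := by
      rw [← hfac]; simp
    rw [this, norm_mul]
    have := hrq z hz
    have h0 : 0 ≤ ‖z - α‖ := (norm_nonneg _)
    nlinarith
  -- choose ρ and k₀
  set ρ : ℝ := 3 * Cc / (cq / 2) with hρ
  have hρpos : 0 < ρ := by positivity
  obtain ⟨k₀, hk₀⟩ := pow_unbounded_of_one_lt (ρ / r) (one_lt_two (α := ℝ))
  refine ⟨k₀, ρ, hρpos, fun k hk => ?_⟩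
  set δ : ℝ := ρ / 2 ^ k with hδdef
  have h2k : (0:ℝ) < 2 ^ k := by positivity
  have hδpos : 0 < δ := by positivity
  have hδr : δ ≤ r := by
    have h1 : ρ / r < 2 ^ k₀ := hk₀
    have h2 : (2:ℝ) ^ k₀ ≤ 2 ^ k := by
      exact pow_le_pow_right₀ (by norm_num) hk
    have : ρ / r < 2 ^ k := lt_of_lt_of_le h1 h2
    rw [div_lt_iff₀ hrpos] at this
    rw [hδdef, div_le_iff₀ h2k]
    nlinarith
  -- suppose no zero in the closed ball
  by_contra hcon
  push_neg at hcon
  have hne : ∀ z ∈ Metric.closedBall α δ, (P k).eval z ≠ 0 := by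
    intro z hz h0
    have hd : ‖z - α‖ ≤ δ := by
      rw [Metric.mem_closedBall, Complex.dist_eq] at hz; exact hz
    exact absurd hd (not_le.2 (hcon z h0))
  -- abs bounds on points of the closed ball
  have habsle : ∀ z : ℂ, ‖z - α‖ ≤ r → ‖z‖ ≤ R := by
    intro z hz
    calc ‖z‖ = ‖α + (z - α)‖ := by ring_nf
      _ ≤ ‖α‖ + ‖z - α‖ := norm_add_le _ _
      _ ≤ R := by rw [hR]; linarith
  -- boundary lower bound
  have hbdry : ∀ z ∈ Metric.sphere α δ, 2 * Cc / 2 ^ k ≤ ‖(P k).eval z‖ := by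
    intro z hz
    rw [Metric.mem_sphere, Complex.dist_eq] at hz
    have hzr : ‖z - α‖ ≤ r := by rw [hz]; exact hδr
    have h1 := hplow z hzr
    rw [hz] at h1
    have hcδ : cq / 2 * δ = 3 * Cc / 2 ^ k := by
      rw [hδdef, hρ]; field_simp
    have h2 := hCbound k z (habsle z hzr)
    have h3 : ‖p.eval z‖ - ‖(P k).eval z - p.eval z‖
        ≤ ‖(P k).eval z‖ := by
      have h4 : ‖p.eval z‖ - ‖(P k).eval z‖
          ≤ ‖p.eval z - (P k).eval z‖ := by
        simpa using norm_sub_norm_le (p.eval z) ((P k).eval z)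
      have h5 : ‖p.eval z - (P k).eval z‖
          = ‖(P k).eval z - p.eval z‖ := by
        rw [← norm_neg, neg_sub]
      linarith
    have : 3 * Cc / 2 ^ k ≤ ‖p.eval z‖ := by rw [← hcδ]; exact h1
    have hC2 : Cc / 2 ^ k + 2 * Cc / 2 ^ k = 3 * Cc / 2 ^ k := by ring
    linarith
  -- maximum modulus principle on 1 / P k
  have hdiff : DiffContOnCl ℂ (fun z => ((P k).eval z)⁻¹) (Metric.ball α δ) := by
    constructor
    · intro z hz
      have hz' : z ∈ Metric.closedBall α δ := Metric.ball_subset_closedBall hz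
      exact ((P k).differentiableAt.inv (hne z hz')).differentiableWithinAt
    · rw [closure_ball α hδpos.ne']
      exact ((P k).continuous.continuousOn).inv₀ hne
  have hmax := Complex.norm_le_of_forall_mem_frontier_norm_le Metric.isBounded_ball hdiff
    (C := (2 * Cc / 2 ^ k)⁻¹) (fun z hz => by
      rw [frontier_ball α hδpos.ne'] at hz
      have := hbdry z hz
      have hpos : (0:ℝ) < 2 * Cc / 2 ^ k := by positivity
      simp only [norm_inv]
      exact inv_anti₀ hpos this)
    (z := α) (by rw [closure_ball α hδpos.ne']; exact Metric.mem_closedBall_self hδpos.le)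
  -- derive contradiction
  have hPα : ‖(P k).eval α‖ ≤ Cc / 2 ^ k := by
    have := hCbound k α (by rw [hR]; linarith [norm_nonneg α])
    simpa [hzero] using this
  have hPα0 : (P k).eval α ≠ 0 := hne α (Metric.mem_closedBall_self hδpos.le)
  have hPαpos : 0 < ‖(P k).eval α‖ := by
    simpa [norm_pos_iff] using hPα0
  rw [norm_inv] at hmax
  have hpos : (0:ℝ) < 2 * Cc / 2 ^ k := by positivity
  have : 2 * Cc / 2 ^ k ≤ ‖(P k).eval α‖ := by
    nlinarith [mul_pos hPαpos hpos, mul_inv_cancel₀ hPαpos.ne', mul_inv_cancel₀ hpos.ne',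
      inv_nonneg.2 hpos.le]
  have h7 : 2 * Cc / 2 ^ k ≤ Cc / 2 ^ k := le_trans this hPα
  have h8 : 2 * Cc / 2 ^ k = 2 * (Cc / 2 ^ k) := by ring
  have h9 : (0:ℝ) < Cc / 2 ^ k := by positivity
  linarith
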